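/- arXiv:2003.04384 — 2 statements merged into one kernel-verified Lean document; each statement's English description precedes it below -/
import Mathlib

section
/- Let H be a subgroup of G and ω ∈ ℓ∞(G)*. Then ω*ℓ∞(G) ⊆ ℓ∞(G/H) if and only if (f·1_H)*ω = f(1_H)·ω for every f ∈ ℓ¹(G). -/
set_option linter.unusedSectionVars false

open scoped ENNReal ComplexOrder

noncomputable section

namespace QG

variable {G : Type*} [Group G]

/-- `ℓ∞(G)`: bounded complex functions on `G`. -/
abbrev Linf (G : Type*) : Type _ := lp (fun _ : G => ℂ) ∞

/-- `ℓ¹(G)`: summable complex functions on `G`. -/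
abbrev L1 (G : Type*) : Type _ := lp (fun _ : G => ℂ) 1

/-- The dual space `ℓ∞(G)*`. -/
abbrev DualLinf (G : Type*) : Type _ := StrongDual ℂ (Linf G)

lemma summable_norm (f : L1 G) : Summable fun s => ‖f s‖ := by
  have h := (lp.memℓp f).summable (by simp)
  simpa using h

lemma norm_apply_le (x : Linf G) (s : G) : ‖x s‖ ≤ ‖x‖ :=
  lp.norm_apply_le_norm ENNReal.top_ne_zero x s

/-- The constant function `1` in `ℓ∞(G)`. -/
def one' : Linf G :=
  ⟨fun _ => (1 : ℂ), memℓp_infty ⟨1, by rintro r ⟨t, rfl⟩; simp⟩⟩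

/-- Left translation: `(L_s x)(t) = x (s * t)`. -/
def Ltrans (s : G) (x : Linf G) : Linf G :=
  ⟨fun t => x (s * t),
    memℓp_infty (BddAbove.mono (by rintro r ⟨t, rfl⟩; exact ⟨s * t, rfl⟩) (lp.memℓp x).bddAbove)⟩

@[simp] lemma Ltrans_apply (s : G) (x : Linf G) (t : G) : Ltrans s x t = x (s * t) := rfl

lemma norm_Ltrans_le (s : G) (x : Linf G) : ‖Ltrans s x‖ ≤ ‖x‖ := by
  rw [lp.norm_eq_ciSup]
  exact ciSup_le fun t => norm_apply_le x (s * t)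

/-- The action `m * x` of `m ∈ ℓ∞(G)*` on `x ∈ ℓ∞(G)`: `(m*x)(s) = m (L_s x)`. -/
def starAct (m : DualLinf G) (x : Linf G) : Linf G :=
  ⟨fun s => m (Ltrans s x),
    memℓp_infty ⟨‖m‖ * ‖x‖, by
      rintro r ⟨s, rfl⟩
      calc ‖m (Ltrans s x)‖ ≤ ‖m‖ * ‖Ltrans s x‖ := m.le_opNorm _
        _ ≤ ‖m‖ * ‖x‖ :=
          mul_le_mul_of_nonneg_left (norm_Ltrans_le s x) (norm_nonneg m)⟩⟩

@[simp] lemma starAct_apply (m : DualLinf G) (x : Linf G) (s : G) :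
    starAct m x s = m (Ltrans s x) := rfl

lemma summable_mul_bound (f : L1 G) (x : Linf G) (t : G) :
    Summable fun s => ‖f s * x (s * t)‖ := by
  refine Summable.of_nonneg_of_le (fun s => norm_nonneg _) (fun s => ?_)
    ((summable_norm f).mul_right ‖x‖)
  rw [norm_mul]
  exact mul_le_mul_of_nonneg_left (norm_apply_le x (s * t)) (norm_nonneg _)

/-- The right action of `ℓ¹(G)` on `ℓ∞(G)`: `(x * f)(t) = ∑_s f s * x (s * t)`. -/
def rAct (x : Linf G) (f : L1 G) : Linf G :=
  ⟨fun t => ∑' s, f s * x (s * t),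
    memℓp_infty ⟨(∑' s, ‖f s‖) * ‖x‖, by
      rintro r ⟨t, rfl⟩
      calc ‖∑' s, f s * x (s * t)‖ ≤ ∑' s, ‖f s * x (s * t)‖ :=
            norm_tsum_le_tsum_norm (summable_mul_bound f x t)
        _ ≤ ∑' s, ‖f s‖ * ‖x‖ :=
            Summable.tsum_le_tsum (fun s => by
                rw [norm_mul]
                exact mul_le_mul_of_nonneg_left (norm_apply_le x (s * t)) (norm_nonneg _))
              (summable_mul_bound f x t) ((summable_norm f).mul_right _)
        _ = (∑' s, ‖f s‖) * ‖x‖ := tsum_mul_right⟩⟩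

@[simp] lemma rAct_apply (x : Linf G) (f : L1 G) (t : G) :
    rAct x f t = ∑' s, f s * x (s * t) := rfl

/-- The shear equivalence of `G × G`. -/
def shearEquiv (G : Type*) [Group G] : G × G ≃ G × G where
  toFun p := (p.2, p.2⁻¹ * p.1)
  invFun p := (p.1 * p.2, p.1)
  left_inv p := by simp
  right_inv p := by simp

lemma conv_prod_summable (f g : L1 G) :
    Summable fun p : G × G => ‖f p.2‖ * ‖g (p.2⁻¹ * p.1)‖ := by
  have h0 : Summable fun p : G × G => ‖f p.1‖ * ‖g p.2‖ :=
    (summable_norm f).mul_of_nonneg (summable_norm g) (fun _ => norm_nonneg _)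
      (fun _ => norm_nonneg _)
  have key : Summable ((fun p : G × G => ‖f p.1‖ * ‖g p.2‖) ∘ (shearEquiv G)) :=
    (shearEquiv G).summable_iff.mpr h0
  have heq : ((fun p : G × G => ‖f p.1‖ * ‖g p.2‖) ∘ (shearEquiv G)) =
      fun p : G × G => ‖f p.2‖ * ‖g (p.2⁻¹ * p.1)‖ := by
    funext p
    simp [shearEquiv, Function.comp]
  rwa [heq] at key

lemma conv_memℓp (f g : L1 G) : Memℓp (fun t : G => ∑' s, f s * g (s⁻¹ * t)) 1 := by
  have hp := conv_prod_summable f g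
  obtain ⟨h1, h2⟩ :=
    (summable_prod_of_nonneg (fun p => mul_nonneg (norm_nonneg _) (norm_nonneg _))).1 hp
  apply memℓp_gen
  simp only [ENNReal.toReal_one, Real.rpow_one]
  refine Summable.of_nonneg_of_le (fun t => norm_nonneg _) (fun t => ?_) h2
  calc ‖∑' s, f s * g (s⁻¹ * t)‖ ≤ ∑' s, ‖f s * g (s⁻¹ * t)‖ :=
        norm_tsum_le_tsum_norm (by simpa only [norm_mul] using h1 t)
    _ = ∑' s, ‖f s‖ * ‖g (s⁻¹ * t)‖ := tsum_congr fun s => norm_mul _ _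

/-- Convolution on `ℓ¹(G)`: `(f * g)(t) = ∑_s f s * g (s⁻¹ t)`. -/
def conv (f g : L1 G) : L1 G :=
  ⟨fun t => ∑' s, f s * g (s⁻¹ * t), conv_memℓp f g⟩

@[simp] lemma conv_apply (f g : L1 G) (t : G) : conv f g t = ∑' s, f s * g (s⁻¹ * t) := rfl

open Classical in
/-- The unit `ε = δ_e` of the convolution algebra `ℓ¹(G)`. -/
def eps : L1 G :=
  ⟨fun t => if t = 1 then 1 else 0, by
    apply memℓp_gen
    refine summable_of_ne_finset_zero (s := ({1} : Finset G)) ?_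
    intro t ht
    simp only [Finset.mem_singleton] at ht
    simp [ht]⟩

open Classical in
/-- Multiplication by the indicator function of `H`: `f · 1_H`. -/
def mulIndic (H : Subgroup G) (f : L1 G) : L1 G :=
  ⟨fun s => if s ∈ H then f s else 0, by
    apply memℓp_gen
    simp only [ENNReal.toReal_one, Real.rpow_one]
    refine Summable.of_nonneg_of_le (fun s => norm_nonneg _) (fun s => ?_) (summable_norm f)
    by_cases h : s ∈ H <;> simp [h]⟩

open Classical in
/-- The indicator function `1_H ∈ ℓ∞(G)` of a subgroup `H`. -/
def indic (H : Subgroup G) : Linf G :=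
  ⟨fun s => if s ∈ H then 1 else 0,
    memℓp_infty ⟨1, by rintro r ⟨s, rfl⟩; by_cases h : s ∈ H <;> simp [h]⟩⟩

/-- A state on `ℓ∞(G)`: unital positive functional. -/
def IsState (m : DualLinf G) : Prop :=
  m one' = 1 ∧ ∀ x : Linf G, (∀ s, 0 ≤ x s) → 0 ≤ m x

/-- `f ∈ Ann_L(m)`, i.e. `f * m = 0`. -/
def memAnnL (m : DualLinf G) (f : L1 G) : Prop :=
  ∀ x : Linf G, ∑' s, f s * m (Ltrans s x) = 0

/-- `f ∈ Inv_L(m, x₀)`, i.e. `f * m = f(x₀) · m`. -/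
def memInvLx (m : DualLinf G) (x₀ : Linf G) (f : L1 G) : Prop :=
  ∀ x : Linf G, ∑' s, f s * m (Ltrans s x) = (∑' s, f s * x₀ s) * m x

/-- `f ∈ Inv_L(m)`, i.e. `f * m = f(1) · m`. -/
def memInvL (m : DualLinf G) (f : L1 G) : Prop :=
  ∀ x : Linf G, ∑' s, f s * m (Ltrans s x) = (∑' s, f s) * m x

/-- A right idempotent state: a state with `m (m * x) = m x` for all `x`. -/
def IsRightIdempotentState (m : DualLinf G) : Prop :=
  IsState m ∧ ∀ x : Linf G, m (starAct m x) = m x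

/-- A character of `G` in `ℓ∞(G)`. -/
def IsCharacter (x : Linf G) : Prop :=
  (∀ s t : G, x (s * t) = x s * x t) ∧ ∀ s : G, ‖x s‖ = 1

/-- `ℓ∞(G/H)`, the right-`H`-invariant elements of `ℓ∞(G)`. -/
def LinfQuot (H : Subgroup G) : Set (Linf G) :=
  {x | ∀ s : G, ∀ h ∈ H, x (s * h) = x s}

/-- `J¹(G,H)`, the preannihilator of `ℓ∞(G/H)` in `ℓ¹(G)`. -/
def J1 (H : Subgroup G) : Set (L1 G) :=
  {f | ∀ x ∈ LinfQuot H, ∑' s, f s * x s = 0}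

/-- `E` witnesses relative amenability of `ℓ∞(G/H)`: a unital positive
`ℓ¹(G)`-module map `ℓ∞(G) → ℓ∞(G)` with range inside `ℓ∞(G/H)`. -/
def IsRelAmenMap (H : Subgroup G) (E : Linf G →ₗ[ℂ] Linf G) : Prop :=
  E one' = one' ∧
  (∀ x : Linf G, (∀ s, 0 ≤ x s) → ∀ s, 0 ≤ E x s) ∧
  (∀ x : Linf G, E x ∈ LinfQuot H) ∧
  (∀ (x : Linf G) (f : L1 G), E (rAct x f) = rAct (E x) f)

/-- `ℓ∞(G/H)` is relatively amenable. -/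
def RelAmen (H : Subgroup G) : Prop :=
  ∃ E : Linf G →ₗ[ℂ] Linf G, IsRelAmenMap H E

/-- `ℓ∞(G/H)` is amenable. -/
def Amen (H : Subgroup G) : Prop :=
  ∃ E : Linf G →ₗ[ℂ] Linf G, IsRelAmenMap H E ∧ ∀ x ∈ LinfQuot H, E x = x

/-- Amenability of a discrete group: existence of a left invariant mean. -/
def GroupAmenable (K : Type*) [Group K] : Prop :=
  ∃ μ : DualLinf K, IsState μ ∧ ∀ (k : K) (y : Linf K), μ (Ltrans k y) = μ y

/-- `H`-invariance of a functional on `ℓ∞(G)`. -/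
def HInvariant (H : Subgroup G) (μ : DualLinf G) : Prop :=
  ∀ h ∈ H, ∀ x : Linf G, μ (Ltrans h x) = μ x

/-- `J` has a bounded right approximate identity contained in `S`. -/
def HasBraiIn (J S : Set (L1 G)) : Prop :=
  ∃ (ι : Type) (l : Filter ι) (e : ι → L1 G), l.NeBot ∧
    (∃ C : ℝ, ∀ i, ‖e i‖ ≤ C) ∧ (∀ i, e i ∈ S) ∧
    ∀ f ∈ J, Filter.Tendsto (fun i => ‖conv f (e i) - f‖) l (nhds 0)

lemma one'_mem_LinfQuot (H : Subgroup G) : (one' : Linf G) ∈ LinfQuot H :=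
  fun _ _ _ => rfl

lemma Ltrans_mem_LinfQuot {H : Subgroup G} {x : Linf G} (hx : x ∈ LinfQuot H) (s : G) :
    Ltrans s x ∈ LinfQuot H := by
  intro t h hh
  show x (s * (t * h)) = x (s * t)
  rw [← mul_assoc]
  exact hx (s * t) h hh

/-- `ℓ∞(G/H)` as a subspace of `ℓ∞(G)`. -/
def LinfQuotSub (H : Subgroup G) : Submodule ℂ (Linf G) where
  carrier := LinfQuot H
  add_mem' := by
    intro a b ha hb s h hh
    show (a + b : Linf G) (s * h) = (a + b : Linf G) s
    rw [lp.coeFn_add]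
    simp only [Pi.add_apply]
    rw [ha s h hh, hb s h hh]
  zero_mem' := by
    intro s h hh
    show (0 : Linf G) (s * h) = (0 : Linf G) s
    rw [lp.coeFn_zero]
    simp
  smul_mem' := by
    intro c a ha s h hh
    show (c • a : Linf G) (s * h) = (c • a : Linf G) s
    rw [lp.coeFn_smul]
    simp only [Pi.smul_apply]
    rw [ha s h hh]

/-- The weak* topology on `ℓ∞(G) = ℓ¹(G)*`: the topology induced by the
pairings against elements of `ℓ¹(G)`. -/
def weakStarTop (G : Type*) [Group G] : TopologicalSpace (Linf G) :=
  TopologicalSpace.induced (fun (y : Linf G) => fun f : L1 G => ∑' s, f s * y s)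
    Pi.topologicalSpace

open Classical

/-- Dirac delta at a point, as an element of `ℓ¹(G)`. -/
def delta (h : G) : L1 G :=
  ⟨fun t => if t = h then 1 else 0, by
    apply memℓp_gen
    refine summable_of_ne_finset_zero (s := ({h} : Finset G)) ?_
    intro t ht
    simp only [Finset.mem_singleton] at ht
    simp [ht]⟩

lemma Ltrans_one (x : Linf G) : Ltrans (1 : G) x = x := by
  apply lp.ext
  funext t
  simp

lemma Ltrans_mul (s h : G) (x : Linf G) :
    Ltrans (s * h) x = Ltrans h (Ltrans s x) := by
  apply lp.ext
  funext t
  simp [mul_assoc]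

/-- `ω * ℓ∞(G) ⊆ ℓ∞(G/H)` iff `(f·1_H) * ω = f(1_H) · ω` for all `f ∈ ℓ¹(G)`. -/
theorem statement8 (H : Subgroup G) (ω : DualLinf G) :
    (∀ x : Linf G, starAct ω x ∈ LinfQuot H) ↔
      ∀ (f : L1 G) (x : Linf G),
        ∑' s, mulIndic H f s * ω (Ltrans s x) = (∑' s, mulIndic H f s) * ω x := by
  constructor
  · intro hinv f x
    have hx1 : ∀ h ∈ H, ω (Ltrans h x) = ω x := by
      intro h hh
      have := hinv x 1 h hh
      simp only [starAct_apply, one_mul] at this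
      rw [this, Ltrans_one]
    rw [← tsum_mul_right]
    refine tsum_congr fun s => ?_
    by_cases hs : s ∈ H
    · rw [hx1 s hs]
    · have : mulIndic H f s = 0 := by
        show (if s ∈ H then f s else 0) = 0
        simp [hs]
      rw [this, zero_mul, zero_mul]
  · intro hf x s h hh
    have key : ∀ (h' : G), h' ∈ H → ∀ y : Linf G, ω (Ltrans h' y) = ω y := by
      intro h' hh' y
      have e1 : ∀ t, mulIndic H (delta h') t = if t = h' then (1 : ℂ) else 0 := by
        intro t
        show (if t ∈ H then (if t = h' then (1 : ℂ) else 0) else 0) = _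
        split_ifs with h1 h2 h2
        · rfl
        · rfl
        · exact absurd (h2 ▸ hh') h1
        · rfl
      have := hf (delta h') y
      simp only [e1] at this
      have e2 : (fun t => (if t = h' then (1 : ℂ) else 0) * ω (Ltrans t y)) =
          fun t => if t = h' then ω (Ltrans h' y) else 0 := by
        funext t
        split_ifs with ht
        · rw [ht, one_mul]
        · rw [zero_mul]
      rw [e2, tsum_ite_eq, tsum_ite_eq, one_mul] at this
      exact this
    show ω (Ltrans (s * h) x) = ω (Ltrans s x)
    rw [Ltrans_mul, key h hh]

end QG
end
end

section
/- Let H be a subgroup of G. Then G is amenable if and only if ℓ∞(G/H) is amenable and there exists a positive linear functional m on ℓ∞(G/H) with m(1) = 1 such that m(L_s x) = m(x) for all s ∈ G and x ∈ ℓ∞(G/H) (note that L_s maps ℓ∞(G/H) into itself). -/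
set_option linter.unusedSectionVars false

open scoped ENNReal ComplexOrder

noncomputable section

namespace QG

variable {G : Type*} [Group G]

/-! ### Auxiliary development for statement12 -/

lemma linf_ext {x y : Linf G} (h : ∀ g, x g = y g) : x = y := lp.ext (funext h)

@[simp] lemma linf_add_apply (x y : Linf G) (g : G) : (x + y) g = x g + y g := rfl
@[simp] lemma linf_sub_apply (x y : Linf G) (g : G) : (x - y) g = x g - y g := rfl
@[simp] lemma linf_smul_apply (c : ℂ) (x : Linf G) (g : G) : (c • x) g = c * x g := rfl
@[simp] lemma one'_apply (g : G) : (one' : Linf G) g = 1 := rfl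

lemma norm_le_of_forall_le {x : Linf G} {C : ℝ} (hC : 0 ≤ C) (h : ∀ g, ‖x g‖ ≤ C) : ‖x‖ ≤ C := by
  rw [lp.norm_eq_ciSup]
  rcases isEmpty_or_nonempty G with hG | hG
  · simpa [Real.iSup_of_isEmpty] using hC
  · exact ciSup_le h

/-- Composition with an arbitrary map `σ : G → G`. -/
def compMap (σ : G → G) (x : Linf G) : Linf G :=
  ⟨fun g => x (σ g),
    memℓp_infty (BddAbove.mono (by rintro r ⟨t, rfl⟩; exact ⟨σ t, rfl⟩) (lp.memℓp x).bddAbove)⟩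

@[simp] lemma compMap_apply (σ : G → G) (x : Linf G) (g : G) : compMap σ x g = x (σ g) := rfl

lemma norm_compMap_le (σ : G → G) (x : Linf G) : ‖compMap σ x‖ ≤ ‖x‖ :=
  norm_le_of_forall_le (norm_nonneg x) (fun g => norm_apply_le x (σ g))

lemma compMap_add (σ : G → G) (x y : Linf G) :
    compMap σ (x + y) = compMap σ x + compMap σ y := linf_ext fun _ => rfl

lemma compMap_smul (σ : G → G) (c : ℂ) (x : Linf G) :
    compMap σ (c • x) = c • compMap σ x := linf_ext fun _ => rfl

/-- Evaluation at a point, as a continuous linear functional on `ℓ∞(G)`. -/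
def evalCLM (g : G) : Linf G →L[ℂ] ℂ :=
  LinearMap.mkContinuous
    { toFun := fun x : Linf G => x g
      map_add' := fun _ _ => rfl
      map_smul' := fun _ _ => rfl }
    1 (fun x => by rw [one_mul]; exact norm_apply_le x g)

@[simp] lemma evalCLM_apply (g : G) (x : Linf G) : evalCLM g x = x g := rfl

open Classical in
/-- The Dirac function at `s` in `ℓ¹(G)`. -/
def deltaL1 (s : G) : L1 G :=
  ⟨fun t => if t = s then 1 else 0, by
    apply memℓp_gen
    refine summable_of_ne_finset_zero (s := ({s} : Finset G)) ?_
    intro t ht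
    simp only [Finset.mem_singleton] at ht
    simp [ht]⟩

lemma rAct_delta (x : Linf G) (s : G) : rAct x (deltaL1 s) = Ltrans s x := by
  classical
  refine linf_ext fun t => ?_
  simp only [rAct_apply, Ltrans_apply]
  have h : ∀ u : G, deltaL1 s u * x (u * t) = if u = s then x (s * t) else 0 := by
    intro u
    show (if u = s then (1:ℂ) else 0) * x (u * t) = _
    split_ifs with h
    · subst h; simp
    · simp
  rw [tsum_congr h, tsum_ite_eq]
set_option maxHeartbeats 800000 in
/-- A positive unital linear functional on `ℓ∞(G)` is bounded (with constant 2). -/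
lemma state_bound (φ : Linf G →ₗ[ℂ] ℂ) (h1 : φ one' = 1)
    (hpos : ∀ x : Linf G, (∀ s, 0 ≤ x s) → 0 ≤ φ x) (x : Linf G) : ‖φ x‖ ≤ 2 * ‖x‖ := by
  have hreal : ∀ y : Linf G, (∀ g, (y g).im = 0) → (φ y).im = 0 ∧ |(φ y).re| ≤ ‖y‖ := by
    intro y hy
    have hbd : ∀ s, |(y s).re| ≤ ‖y‖ := by
      intro s
      refine le_trans ?_ (norm_apply_le y s)
      exact Complex.abs_re_le_norm (y s)
    have ha : (0:ℂ) ≤ φ ((‖y‖ : ℂ) • one' + y) := by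
      refine hpos ((‖y‖ : ℂ) • one' + y) fun s => ?_
      rw [linf_add_apply, linf_smul_apply, one'_apply, mul_one, Complex.le_def]
      refine ⟨?_, ?_⟩
      · simp only [Complex.zero_re, Complex.add_re, Complex.ofReal_re]
        linarith [(abs_le.mp (hbd s)).1]
      · rw [Complex.zero_im, Complex.add_im, Complex.ofReal_im, hy s, add_zero]
    have hb : (0:ℂ) ≤ φ ((‖y‖ : ℂ) • one' - y) := by
      refine hpos ((‖y‖ : ℂ) • one' - y) fun s => ?_
      rw [linf_sub_apply, linf_smul_apply, one'_apply, mul_one, Complex.le_def]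
      refine ⟨?_, ?_⟩
      · simp only [Complex.zero_re, Complex.sub_re, Complex.ofReal_re]
        linarith [(abs_le.mp (hbd s)).2]
      · rw [Complex.zero_im, Complex.sub_im, Complex.ofReal_im, hy s, sub_zero]
    rw [map_add, map_smul, h1, smul_eq_mul, mul_one, Complex.le_def] at ha
    rw [map_sub, map_smul, h1, smul_eq_mul, mul_one, Complex.le_def] at hb
    simp only [Complex.zero_re, Complex.zero_im, Complex.add_re, Complex.add_im,
      Complex.sub_re, Complex.sub_im, Complex.ofReal_re, Complex.ofReal_im] at ha hb
    refine ⟨by linarith [ha.2, hb.2], ?_⟩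
    rw [abs_le]
    constructor <;> linarith [ha.1, hb.1]
  have mem_re : Memℓp (fun g => (((x g).re : ℝ) : ℂ)) (∞ : ℝ≥0∞) :=
    memℓp_infty ⟨‖x‖, by
      rintro r ⟨g, rfl⟩
      show ‖(((x g).re : ℝ) : ℂ)‖ ≤ ‖x‖
      rw [Complex.norm_real, Real.norm_eq_abs]
      exact le_trans (Complex.abs_re_le_norm (x g)) (norm_apply_le x g)⟩
  have mem_im : Memℓp (fun g => (((x g).im : ℝ) : ℂ)) (∞ : ℝ≥0∞) :=
    memℓp_infty ⟨‖x‖, by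
      rintro r ⟨g, rfl⟩
      show ‖(((x g).im : ℝ) : ℂ)‖ ≤ ‖x‖
      rw [Complex.norm_real, Real.norm_eq_abs]
      exact le_trans (Complex.abs_im_le_norm (x g)) (norm_apply_le x g)⟩
  set reL : Linf G := ⟨fun g => (((x g).re : ℝ) : ℂ), mem_re⟩ with hreL
  set imL : Linf G := ⟨fun g => (((x g).im : ℝ) : ℂ), mem_im⟩ with himL
  have reL_app : ∀ g, reL g = ((x g).re : ℂ) := fun _ => rfl
  have imL_app : ∀ g, imL g = ((x g).im : ℂ) := fun _ => rfl
  have hdecomp : x = reL + Complex.I • imL := by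
    refine linf_ext fun g => ?_
    rw [linf_add_apply, linf_smul_apply, reL_app, imL_app, mul_comm, Complex.re_add_im]
  have hre := hreal reL (fun g => by rw [reL_app]; exact Complex.ofReal_im _)
  have him := hreal imL (fun g => by rw [imL_app]; exact Complex.ofReal_im _)
  have hreled : ‖reL‖ ≤ ‖x‖ := norm_le_of_forall_le (norm_nonneg x) fun g => by
    rw [reL_app, Complex.norm_real, Real.norm_eq_abs]
    exact le_trans (Complex.abs_re_le_norm (x g)) (norm_apply_le x g)
  have himled : ‖imL‖ ≤ ‖x‖ := norm_le_of_forall_le (norm_nonneg x) fun g => by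
    rw [imL_app, Complex.norm_real, Real.norm_eq_abs]
    exact le_trans (Complex.abs_im_le_norm (x g)) (norm_apply_le x g)
  have hnre : ‖φ reL‖ ≤ ‖x‖ := by
    have h' : φ reL = (((φ reL).re : ℝ) : ℂ) := Complex.ext rfl (by simp [hre.1])
    rw [h', Complex.norm_real, Real.norm_eq_abs]
    exact le_trans hre.2 hreled
  have hnim : ‖φ imL‖ ≤ ‖x‖ := by
    have h' : φ imL = (((φ imL).re : ℝ) : ℂ) := Complex.ext rfl (by simp [him.1])
    rw [h', Complex.norm_real, Real.norm_eq_abs]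
    exact le_trans him.2 himled
  calc ‖φ x‖ = ‖φ reL + Complex.I * φ imL‖ := by
        rw [hdecomp, map_add, map_smul, smul_eq_mul]
    _ ≤ ‖φ reL‖ + ‖Complex.I * φ imL‖ := norm_add_le _ _
    _ = ‖φ reL‖ + ‖φ imL‖ := by rw [norm_mul, Complex.norm_I, one_mul]
    _ ≤ ‖x‖ + ‖x‖ := add_le_add hnre hnim
    _ = 2 * ‖x‖ := by ring
/-- A representative of the right coset `Hg`. -/
def rrep (H : Subgroup G) (g : G) : G := (Quotient.mk (QuotientGroup.rightRel H) g).out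

/-- The `H`-part of `g`: `etaH H g = g * (rrep H g)⁻¹ ∈ H`. -/
def etaH (H : Subgroup G) (g : G) : G := g * (rrep H g)⁻¹

lemma etaH_mem (H : Subgroup G) (g : G) : etaH H g ∈ H := by
  have h := Quotient.mk_out (s := QuotientGroup.rightRel H) g
  rw [QuotientGroup.rightRel_apply] at h
  exact h

lemma rrep_mul (H : Subgroup G) {h : G} (hh : h ∈ H) (g : G) : rrep H (h * g) = rrep H g := by
  unfold rrep
  congr 1
  refine Quotient.sound ?_
  show (QuotientGroup.rightRel H) (h * g) g
  rw [QuotientGroup.rightRel_apply]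
  have : g * (h * g)⁻¹ = h⁻¹ := by group
  rw [this]
  exact inv_mem hh

lemma etaH_mul (H : Subgroup G) {h : G} (hh : h ∈ H) (g : G) :
    etaH H (h * g) = h * etaH H g := by
  unfold etaH
  rw [rrep_mul H hh g, mul_assoc]

/-- The conditional expectation onto `ℓ∞(G/H)` built from an invariant mean `μ`. -/
def Emap (μ : DualLinf G) (H : Subgroup G) : Linf G →ₗ[ℂ] Linf G where
  toFun x := ⟨fun s => μ (compMap (fun g => s * etaH H g) x),
    memℓp_infty ⟨‖μ‖ * ‖x‖, by
      rintro r ⟨s, rfl⟩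
      show ‖μ (compMap (fun g => s * etaH H g) x)‖ ≤ ‖μ‖ * ‖x‖
      calc ‖μ (compMap (fun g => s * etaH H g) x)‖
          ≤ ‖μ‖ * ‖compMap (fun g => s * etaH H g) x‖ := μ.le_opNorm _
        _ ≤ ‖μ‖ * ‖x‖ := mul_le_mul_of_nonneg_left (norm_compMap_le _ x) (norm_nonneg μ)⟩⟩
  map_add' x y := linf_ext fun s => by
    show μ (compMap (fun g => s * etaH H g) (x + y))
      = μ (compMap (fun g => s * etaH H g) x) + μ (compMap (fun g => s * etaH H g) y)
    rw [compMap_add, map_add]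
  map_smul' c x := linf_ext fun s => by
    show μ (compMap (fun g => s * etaH H g) (c • x)) = c * μ (compMap (fun g => s * etaH H g) x)
    rw [compMap_smul, map_smul, smul_eq_mul]

@[simp] lemma Emap_apply (μ : DualLinf G) (H : Subgroup G) (x : Linf G) (s : G) :
    Emap μ H x s = μ (compMap (fun g => s * etaH H g) x) := rfl

lemma Emap_one (μ : DualLinf G) (hμ1 : μ one' = 1) (H : Subgroup G) : Emap μ H one' = one' := by
  refine linf_ext fun s => ?_
  rw [Emap_apply, show compMap (fun g => s * etaH H g) one' = one' from linf_ext fun g => rfl,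
    hμ1]
  rfl

lemma Emap_quot (μ : DualLinf G) (hinv : ∀ (s : G) (x : Linf G), μ (Ltrans s x) = μ x)
    (H : Subgroup G) (x : Linf G) : Emap μ H x ∈ LinfQuot H := by
  intro s h hh
  rw [Emap_apply, Emap_apply]
  have key : compMap (fun g => s * h * etaH H g) x
      = Ltrans h (compMap (fun g => s * etaH H g) x) := by
    refine linf_ext fun g => ?_
    show x (s * h * etaH H g) = x (s * etaH H (h * g))
    rw [etaH_mul H hh g, ← mul_assoc]
  rw [key, hinv h _]

lemma Emap_id (μ : DualLinf G) (hμ1 : μ one' = 1) (H : Subgroup G) {x : Linf G}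
    (hx : x ∈ LinfQuot H) : Emap μ H x = x := by
  refine linf_ext fun s => ?_
  rw [Emap_apply]
  have key : compMap (fun g => s * etaH H g) x = x s • one' := by
    refine linf_ext fun g => ?_
    show x (s * etaH H g) = x s * 1
    rw [hx s _ (etaH_mem H g), mul_one]
  rw [key, map_smul, smul_eq_mul, hμ1, mul_one]

lemma Emap_module (μ : DualLinf G) (H : Subgroup G) (x : Linf G) (f : L1 G) :
    Emap μ H (rAct x f) = rAct (Emap μ H x) f := by
  refine linf_ext fun t => ?_
  have hsum : Summable (fun s : G => f s • compMap (fun g => s * t * etaH H g) x) := by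
    apply Summable.of_norm
    refine Summable.of_nonneg_of_le (fun s => norm_nonneg _) (fun s => ?_)
      ((summable_norm f).mul_right ‖x‖)
    rw [norm_smul]
    exact mul_le_mul_of_nonneg_left (norm_compMap_le _ x) (norm_nonneg _)
  have hz : compMap (fun g => t * etaH H g) (rAct x f)
      = ∑' s, f s • compMap (fun g => s * t * etaH H g) x := by
    refine linf_ext fun g => ?_
    have h1 : (∑' s, f s • compMap (fun g' => s * t * etaH H g') x) g
        = ∑' s, f s * x (s * t * etaH H g) := by
      rw [show (∑' s, f s • compMap (fun g' => s * t * etaH H g') x) g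
          = evalCLM g (∑' s, f s • compMap (fun g' => s * t * etaH H g') x) from rfl,
        (evalCLM g).map_tsum hsum]
      exact tsum_congr fun s => rfl
    rw [h1, compMap_apply, rAct_apply]
    exact tsum_congr fun s => by rw [mul_assoc]
  show μ (compMap (fun g => t * etaH H g) (rAct x f)) = rAct (Emap μ H x) f t
  rw [hz, μ.map_tsum hsum, rAct_apply]
  exact tsum_congr fun s => by rw [map_smul, smul_eq_mul]; rfl

/-- `G` is amenable iff `ℓ∞(G/H)` is amenable and carries a left invariant
state. -/
theorem statement12 (H : Subgroup G) :
    GroupAmenable G ↔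
      (Amen H ∧ ∃ m : LinfQuotSub H →ₗ[ℂ] ℂ,
        m ⟨one', one'_mem_LinfQuot H⟩ = 1 ∧
        (∀ x : LinfQuotSub H, (∀ s, 0 ≤ (x : Linf G) s) → 0 ≤ m x) ∧
        ∀ (s : G) (x : LinfQuotSub H),
          m ⟨Ltrans s (x : Linf G), Ltrans_mem_LinfQuot x.2 s⟩ = m x) := by
  constructor
  · rintro ⟨μ, ⟨hμ1, hμpos⟩, hμinv⟩
    refine ⟨⟨Emap μ H, ⟨Emap_one μ hμ1 H, fun x hx s => hμpos _ (fun g => hx _),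
      Emap_quot μ (fun s x => hμinv s x) H, Emap_module μ H⟩,
      fun x hx => Emap_id μ hμ1 H hx⟩, ?_⟩
    refine ⟨μ.toLinearMap.comp (LinfQuotSub H).subtype, ?_, ?_, ?_⟩
    · exact hμ1
    · intro x hx
      exact hμpos _ hx
    · intro s x
      exact hμinv s (x : Linf G)
  · rintro ⟨⟨E, ⟨hE1, hEpos, hEquot, hEmod⟩, hEid⟩, m, hm1, hmpos, hminv⟩
    set E' : Linf G →ₗ[ℂ] LinfQuotSub H := E.codRestrict (LinfQuotSub H) hEquot with hE'
    set φ : Linf G →ₗ[ℂ] ℂ := m.comp E' with hφdef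
    have hφ1 : φ one' = 1 := by
      have h0 : E' one' = ⟨one', one'_mem_LinfQuot H⟩ := Subtype.ext hE1
      show m (E' one') = 1
      rw [h0, hm1]
    have hφpos : ∀ x : Linf G, (∀ s, 0 ≤ x s) → 0 ≤ φ x := fun x hx =>
      hmpos (E' x) (fun s => hEpos x hx s)
    refine ⟨φ.mkContinuous 2 (state_bound φ hφ1 hφpos), ⟨hφ1, hφpos⟩, ?_⟩
    intro s x
    show φ (Ltrans s x) = φ x
    have h2 : E (Ltrans s x) = Ltrans s (E x) := by
      rw [← rAct_delta x s, hEmod, rAct_delta]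
    have h3 : E' (Ltrans s x)
        = ⟨Ltrans s ((E' x : Linf G)), Ltrans_mem_LinfQuot (E' x).2 s⟩ := Subtype.ext h2
    show m (E' (Ltrans s x)) = m (E' x)
    rw [h3, hminv s (E' x)]

end QG
end
end
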